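/- Let V be a finite-dimensional real vector space, Π̃ : V* → V and B̃ : V → V* skew-symmetric linear maps. The gauge transform τ_B(L_Π) of the graph L_Π = {(Π̃α, α) : α ∈ V*} is the graph of a skew-symmetric map V* → V if and only if the map id + B̃∘Π̃ : V* → V* is invertible; in that case τ_B(L_Π) is the graph of Π̃∘(id + B̃∘Π̃)⁻¹. -/

import Mathlib

/-- The linear map `(X, α) ↦ (X, α + B(X))` on `V ⊕ V*` implementing the gauge
transformation `τ_B`. -/
noncomputable def gaugeMap (V : Type*) [AddCommGroup V] [Module ℝ V]
    (B : V →ₗ[ℝ] Module.Dual ℝ V) :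
    V × Module.Dual ℝ V →ₗ[ℝ] V × Module.Dual ℝ V :=
  (LinearMap.fst ℝ V (Module.Dual ℝ V)).prod
    (LinearMap.snd ℝ V (Module.Dual ℝ V) + B ∘ₗ LinearMap.fst ℝ V (Module.Dual ℝ V))

lemma gauge_eq_aux (V : Type*) [AddCommGroup V] [Module ℝ V]
    (P : Module.Dual ℝ V →ₗ[ℝ] V) (B : V →ₗ[ℝ] Module.Dual ℝ V)
    (e : Module.Dual ℝ V ≃ₗ[ℝ] Module.Dual ℝ V)
    (he : (e : Module.Dual ℝ V →ₗ[ℝ] Module.Dual ℝ V)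
        = (LinearMap.id : Module.Dual ℝ V →ₗ[ℝ] Module.Dual ℝ V) + B ∘ₗ P) :
    Submodule.map (gaugeMap V B)
        (LinearMap.range
          (P.prod (LinearMap.id : Module.Dual ℝ V →ₗ[ℝ] Module.Dual ℝ V))) =
      LinearMap.range
        ((P ∘ₗ (e.symm : Module.Dual ℝ V →ₗ[ℝ] Module.Dual ℝ V)).prod
          (LinearMap.id : Module.Dual ℝ V →ₗ[ℝ] Module.Dual ℝ V)) := by
  have heval : ∀ α, e α = α + B (P α) := by
    intro α
    have := LinearMap.congr_fun he α
    simpa using this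
  ext p
  simp only [Submodule.mem_map, LinearMap.mem_range]
  constructor
  · rintro ⟨q, ⟨α, rfl⟩, rfl⟩
    refine ⟨e α, ?_⟩
    have : e.symm (e α) = α := e.symm_apply_apply α
    apply Prod.ext <;>
      simp [gaugeMap, this, ← heval]
  · rintro ⟨β, rfl⟩
    refine ⟨(P.prod LinearMap.id) (e.symm β), ⟨e.symm β, rfl⟩, ?_⟩
    apply Prod.ext <;>
      simp [gaugeMap, ← heval, e.apply_symm_apply]

/-- The gauge transform `τ_B(L_Π)` of the graph of a skew map `Π̃ : V* → V` by a skew map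
`B̃ : V → V*` is the graph of a skew map `V* → V` iff `id + B̃∘Π̃` is invertible, in which
case it is the graph of `Π̃ ∘ (id + B̃∘Π̃)⁻¹`. -/
theorem stmt_14 (V : Type*) [AddCommGroup V] [Module ℝ V] [FiniteDimensional ℝ V]
    (P : Module.Dual ℝ V →ₗ[ℝ] V) (B : V →ₗ[ℝ] Module.Dual ℝ V)
    (hP : ∀ α β : Module.Dual ℝ V, β (P α) = - α (P β))
    (hB : ∀ X Y : V, B X Y = - B Y X) :
    ((∃ S : Module.Dual ℝ V →ₗ[ℝ] V,
        (∀ α β : Module.Dual ℝ V, β (S α) = - α (S β)) ∧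
        Submodule.map (gaugeMap V B)
            (LinearMap.range
              (P.prod (LinearMap.id : Module.Dual ℝ V →ₗ[ℝ] Module.Dual ℝ V))) =
          LinearMap.range
            (S.prod (LinearMap.id : Module.Dual ℝ V →ₗ[ℝ] Module.Dual ℝ V))) ↔
      Function.Bijective ((LinearMap.id : Module.Dual ℝ V →ₗ[ℝ] Module.Dual ℝ V) + B ∘ₗ P)) ∧
    ∀ e : Module.Dual ℝ V ≃ₗ[ℝ] Module.Dual ℝ V,
      (e : Module.Dual ℝ V →ₗ[ℝ] Module.Dual ℝ V) = (LinearMap.id : Module.Dual ℝ V →ₗ[ℝ] Module.Dual ℝ V) + B ∘ₗ P →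
      Submodule.map (gaugeMap V B)
          (LinearMap.range
            (P.prod (LinearMap.id : Module.Dual ℝ V →ₗ[ℝ] Module.Dual ℝ V))) =
        LinearMap.range
          ((P ∘ₗ (e.symm : Module.Dual ℝ V →ₗ[ℝ] Module.Dual ℝ V)).prod
            (LinearMap.id : Module.Dual ℝ V →ₗ[ℝ] Module.Dual ℝ V)) := by
  refine ⟨⟨?_, ?_⟩, fun e he => gauge_eq_aux V P B e he⟩
  · rintro ⟨S, hS, hSeq⟩
    have hinj : Function.Injective
        ((LinearMap.id : Module.Dual ℝ V →ₗ[ℝ] Module.Dual ℝ V) + B ∘ₗ P) := by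
      rw [← LinearMap.ker_eq_bot, LinearMap.ker_eq_bot']
      intro α hα
      have hα' : α + B (P α) = 0 := by simpa using hα
      have hmem : ((P α, (0 : Module.Dual ℝ V)) : V × Module.Dual ℝ V) ∈
          Submodule.map (gaugeMap V B)
            (LinearMap.range
              (P.prod (LinearMap.id : Module.Dual ℝ V →ₗ[ℝ] Module.Dual ℝ V))) := by
        refine ⟨(P α, α), ⟨α, rfl⟩, ?_⟩
        simp only [gaugeMap, LinearMap.prod_apply, Pi.prod, LinearMap.fst_apply,
          LinearMap.snd_apply, LinearMap.add_apply, LinearMap.coe_comp, Function.comp_apply]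
        exact Prod.ext rfl hα'
      rw [hSeq] at hmem
      obtain ⟨β, hβ⟩ := hmem
      have hβ2 : β = 0 := congrArg Prod.snd hβ
      have hPα : P α = 0 := by
        have := congrArg Prod.fst hβ
        simp only [LinearMap.prod_apply, Function.prod] at this
        rw [← this, hβ2, map_zero]
      have : α = 0 := by
        have := hα'
        rw [hPα, map_zero, add_zero] at this
        exact this
      exact this
    exact ⟨hinj, (LinearMap.injective_iff_surjective).mp hinj⟩
  · intro hbij
    set e := LinearEquiv.ofBijective _ hbij with he
    have hec : (e : Module.Dual ℝ V →ₗ[ℝ] Module.Dual ℝ V)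
        = (LinearMap.id : Module.Dual ℝ V →ₗ[ℝ] Module.Dual ℝ V) + B ∘ₗ P := rfl
    refine ⟨P ∘ₗ (e.symm : Module.Dual ℝ V →ₗ[ℝ] Module.Dual ℝ V), ?_,
      gauge_eq_aux V P B e hec⟩
    have key : ∀ γ δ : Module.Dual ℝ V,
        (δ + B (P δ)) (P γ) = - ((γ + B (P γ)) (P δ)) := by
      intro γ δ
      simp only [LinearMap.add_apply]
      rw [hP γ δ, hB (P δ) (P γ)]
      ring
    intro α β
    have hα : α = e.symm α + B (P (e.symm α)) := by
      conv_lhs => rw [← e.apply_symm_apply α]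
      have := LinearMap.congr_fun hec (e.symm α)
      simpa using this
    have hβ : β = e.symm β + B (P (e.symm β)) := by
      conv_lhs => rw [← e.apply_symm_apply β]
      have := LinearMap.congr_fun hec (e.symm β)
      simpa using this
    simp only [LinearMap.coe_comp, Function.comp_apply]
    calc β (P (e.symm α)) = (e.symm β + B (P (e.symm β))) (P (e.symm α)) := by rw [← hβ]
      _ = - ((e.symm α + B (P (e.symm α))) (P (e.symm β))) := key _ _
      _ = - α (P (e.symm β)) := by rw [← hα]
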